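/- Suppose b₁, b₂ ∈ GL_d(ℚ_p) and a sequence x_n ∈ GL_d(ℚ_p) satisfy (1/n)·ln‖Λ_n⁻¹ b₁⁻¹ x_n‖_p → 0 and (1/n)·ln‖x_n⁻¹ b₂ Λ_n‖_p → 0 as n → ∞, where Λ_n is the diagonal matrix with (Λ_n)_{ii} = p^{-⌊nλ_i/ln p⌋} for fixed reals λ_1 ≥ ... ≥ λ_d. Then b₁⁻¹b₂ belongs to the parabolic subgroup P_p = {u : u_{ij} = 0 whenever λ_i < λ_j}. -/

import Mathlib

open Matrix
noncomputable def lnplus (x : ℝ) : ℝ := max (Real.log x) 0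

noncomputable def opNormP (p : ℕ) [Fact p.Prime] {n : Type*} [Fintype n] [DecidableEq n]
    (g : Matrix n n ℚ_[p]) : ℝ :=
  ‖LinearMap.toContinuousLinearMap g.mulVecLin‖

noncomputable def dP (p : ℕ) [Fact p.Prime] {d : ℕ}
    (g h : GL (Fin d) ℚ_[p]) : ℝ :=
  lnplus (opNormP p ((g⁻¹ * h : GL (Fin d) ℚ_[p]) : Matrix (Fin d) (Fin d) ℚ_[p]))
  + lnplus (opNormP p ((h⁻¹ * g : GL (Fin d) ℚ_[p]) : Matrix (Fin d) (Fin d) ℚ_[p]))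


/-- The invertible diagonal matrix with entries `p^(f i)`. -/
noncomputable def diagGL (p : ℕ) [hp : Fact p.Prime] {d : ℕ} (f : Fin d → ℤ) :
    GL (Fin d) ℚ_[p] :=
  ⟨Matrix.diagonal fun i => (p : ℚ_[p]) ^ f i,
   Matrix.diagonal fun i => (p : ℚ_[p]) ^ (-f i),
   by
     rw [Matrix.diagonal_mul_diagonal]
     have hne : (p : ℚ_[p]) ≠ 0 := Nat.cast_ne_zero.mpr hp.out.ne_zero
     simp [mul_inv_cancel₀ (zpow_ne_zero _ hne)],
   by
     rw [Matrix.diagonal_mul_diagonal]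
     have hne : (p : ℚ_[p]) ≠ 0 := Nat.cast_ne_zero.mpr hp.out.ne_zero
     simp [inv_mul_cancel₀ (zpow_ne_zero _ hne)]⟩

/-- `Λ_n`: the diagonal matrix with entries `p^{-⌊nλ_i/ln p⌋}`. -/
noncomputable def LamP (p : ℕ) [Fact p.Prime] {d : ℕ} (lam : Fin d → ℝ) (n : ℕ) :
    GL (Fin d) ℚ_[p] :=
  diagGL p fun i => -⌊(n * lam i) / Real.log p⌋


open Filter

section aux
variable {p : ℕ} [Fact p.Prime] {d : ℕ}

lemma opNormP_mul_le (A B : Matrix (Fin d) (Fin d) ℚ_[p]) :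
    opNormP p (A * B) ≤ opNormP p A * opNormP p B := by
  unfold opNormP
  have h : LinearMap.toContinuousLinearMap ((A * B).mulVecLin)
      = (LinearMap.toContinuousLinearMap A.mulVecLin).comp
        (LinearMap.toContinuousLinearMap B.mulVecLin) := by
    ext x
    simp [Matrix.mulVecLin_mul]
  rw [h]
  exact ContinuousLinearMap.opNorm_comp_le _ _

lemma norm_entry_le_opNormP (A : Matrix (Fin d) (Fin d) ℚ_[p]) (i j : Fin d) :
    ‖A i j‖ ≤ opNormP p A := by
  have h := (LinearMap.toContinuousLinearMap A.mulVecLin).le_opNorm (Pi.single j 1)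
  simp only [LinearMap.coe_toContinuousLinearMap', Matrix.mulVecLin_apply,
    Matrix.mulVec_single, Pi.norm_single, norm_one, mul_one] at h
  calc ‖A i j‖ = ‖(fun i => A i j * 1) i‖ := by simp
    _ ≤ ‖fun i => A i j * 1‖ := norm_le_pi_norm (fun i => A i j * 1) i
    _ ≤ opNormP p A := by simp only [mul_one]; simp at h; exact h

lemma opNormP_nonneg (A : Matrix (Fin d) (Fin d) ℚ_[p]) : 0 ≤ opNormP p A :=
  norm_nonneg _

lemma opNormP_pos (i : Fin d) (g : GL (Fin d) ℚ_[p]) :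
    0 < opNormP p (g : Matrix (Fin d) (Fin d) ℚ_[p]) := by
  have h1 : (1:ℝ) = ‖((g : Matrix (Fin d) (Fin d) ℚ_[p]) * (↑g⁻¹ : Matrix (Fin d) (Fin d) ℚ_[p])) i i‖ := by
    have : (g : Matrix (Fin d) (Fin d) ℚ_[p]) * (↑g⁻¹ : Matrix (Fin d) (Fin d) ℚ_[p]) = 1 := by
      rw [← Units.val_mul, mul_inv_cancel, Units.val_one]
    rw [this]
    simp
  have h2 := (norm_entry_le_opNormP ((g : Matrix (Fin d) (Fin d) ℚ_[p]) * (↑g⁻¹ : Matrix (Fin d) (Fin d) ℚ_[p])) i i).trans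
    (opNormP_mul_le _ _)
  rw [← h1] at h2
  nlinarith [opNormP_nonneg (p := p) (g : Matrix (Fin d) (Fin d) ℚ_[p]),
    opNormP_nonneg (p := p) (↑g⁻¹ : Matrix (Fin d) (Fin d) ℚ_[p])]

lemma tendsto_floor_mul_div (t : ℝ) :
    Tendsto (fun n : ℕ => (⌊(n : ℝ) * t⌋ : ℝ) / n) atTop (nhds t) := by
  have hlow : Tendsto (fun n : ℕ => t - 1 / (n : ℝ)) atTop (nhds t) := by
    simpa using (tendsto_const_nhds (x := t)).sub (tendsto_one_div_atTop_nhds_zero_nat)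
  apply tendsto_of_tendsto_of_tendsto_of_le_of_le' hlow tendsto_const_nhds
  · filter_upwards [eventually_ge_atTop 1] with n hn
    have hn' : (0:ℝ) < n := by exact_mod_cast hn
    have h := (Int.sub_one_lt_floor ((n:ℝ) * t)).le
    calc t - 1 / (n:ℝ) = ((n:ℝ) * t - 1) / n := by field_simp
      _ ≤ (⌊(n:ℝ) * t⌋ : ℝ) / n := by gcongr
  · filter_upwards [eventually_ge_atTop 1] with n hn
    have hn' : (0:ℝ) < n := by exact_mod_cast hn
    rw [div_le_iff₀ hn']
    calc (⌊(n:ℝ)*t⌋:ℝ) ≤ (n:ℝ)*t := Int.floor_le _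
      _ = t * n := mul_comm _ _

lemma diagGL_val (f : Fin d → ℤ) :
    ((diagGL p f : GL (Fin d) ℚ_[p]) : Matrix (Fin d) (Fin d) ℚ_[p])
      = Matrix.diagonal fun i => (p : ℚ_[p]) ^ f i := rfl

lemma diagGL_inv_val (f : Fin d → ℤ) :
    (((diagGL p f)⁻¹ : GL (Fin d) ℚ_[p]) : Matrix (Fin d) (Fin d) ℚ_[p])
      = Matrix.diagonal fun i => (p : ℚ_[p]) ^ (-f i) := rfl

end aux

open Filter in
/-- If `(1/n)·ln‖Λ_n⁻¹ b₁⁻¹ x_n‖_p → 0` and `(1/n)·ln‖x_n⁻¹ b₂ Λ_n‖_p → 0`, then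
`b₁⁻¹ b₂` belongs to the parabolic subgroup `P_p = {u : u_{ij} = 0 whenever λ_i < λ_j}`. -/
theorem mem_parabolic_of_tendsto (p : ℕ) [Fact p.Prime] (d : ℕ)
    (lam : Fin d → ℝ) (hlam : Antitone lam)
    (b₁ b₂ : GL (Fin d) ℚ_[p]) (x : ℕ → GL (Fin d) ℚ_[p])
    (h₁ : Tendsto (fun n : ℕ => (1 / (n : ℝ)) *
        Real.log (opNormP p (((LamP p lam n)⁻¹ * b₁⁻¹ * x n : GL (Fin d) ℚ_[p]) :
          Matrix (Fin d) (Fin d) ℚ_[p]))) atTop (nhds 0))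
    (h₂ : Tendsto (fun n : ℕ => (1 / (n : ℝ)) *
        Real.log (opNormP p (((x n)⁻¹ * b₂ * LamP p lam n : GL (Fin d) ℚ_[p]) :
          Matrix (Fin d) (Fin d) ℚ_[p]))) atTop (nhds 0)) :
    ∀ i j : Fin d, lam i < lam j →
      ((b₁⁻¹ * b₂ : GL (Fin d) ℚ_[p]) : Matrix (Fin d) (Fin d) ℚ_[p]) i j = 0 := by
  intro i j hij
  by_contra huij
  have hp1 : (1:ℝ) < p := by exact_mod_cast (Fact.out : p.Prime).one_lt
  have hp0 : (p:ℝ) ≠ 0 := (zero_lt_one.trans hp1).ne'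
  have hL : 0 < Real.log p := Real.log_pos hp1
  have hcnorm : (0:ℝ) <
      ‖((b₁⁻¹ * b₂ : GL (Fin d) ℚ_[p]) : Matrix (Fin d) (Fin d) ℚ_[p]) i j‖ :=
    norm_pos_iff.mpr huij
  -- abbreviations
  set cn : ℝ := ‖((b₁⁻¹ * b₂ : GL (Fin d) ℚ_[p]) : Matrix (Fin d) (Fin d) ℚ_[p]) i j‖
    with hcn
  set D : ℕ → ℤ := fun n =>
    ⌊((n:ℝ) * lam j) / Real.log p⌋ - ⌊((n:ℝ) * lam i) / Real.log p⌋ with hDdef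
  set a : ℕ → ℝ := fun n : ℕ => (1 / (n : ℝ)) *
        Real.log (opNormP p (((LamP p lam n)⁻¹ * b₁⁻¹ * x n : GL (Fin d) ℚ_[p]) :
          Matrix (Fin d) (Fin d) ℚ_[p])) with hadef
  set b : ℕ → ℝ := fun n : ℕ => (1 / (n : ℝ)) *
        Real.log (opNormP p (((x n)⁻¹ * b₂ * LamP p lam n : GL (Fin d) ℚ_[p]) :
          Matrix (Fin d) (Fin d) ℚ_[p])) with hbdef
  set Lo : ℕ → ℝ := fun n => (1 / (n:ℝ)) * (Real.log cn + (D n : ℝ) * Real.log p)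
    with hLodef
  -- entry of the conjugated matrix
  have hentry : ∀ n : ℕ,
      ‖((((LamP p lam n)⁻¹ * b₁⁻¹ * x n) * ((x n)⁻¹ * b₂ * LamP p lam n) :
          GL (Fin d) ℚ_[p]) : Matrix (Fin d) (Fin d) ℚ_[p]) i j‖
        = cn * (p:ℝ) ^ (D n) := by
    intro n
    have hg : (((LamP p lam n)⁻¹ * b₁⁻¹ * x n) * ((x n)⁻¹ * b₂ * LamP p lam n) :
        GL (Fin d) ℚ_[p]) = (LamP p lam n)⁻¹ * (b₁⁻¹ * b₂) * LamP p lam n := by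
      group
    rw [hg]
    have hval : (((LamP p lam n)⁻¹ * (b₁⁻¹ * b₂) * LamP p lam n : GL (Fin d) ℚ_[p]) :
        Matrix (Fin d) (Fin d) ℚ_[p])
        = (Matrix.diagonal fun k => (p : ℚ_[p]) ^ (⌊((n:ℝ) * lam k) / Real.log p⌋))
          * ((b₁⁻¹ * b₂ : GL (Fin d) ℚ_[p]) : Matrix (Fin d) (Fin d) ℚ_[p])
          * (Matrix.diagonal fun k => (p : ℚ_[p]) ^ (-⌊((n:ℝ) * lam k) / Real.log p⌋)) := by
      rw [Units.val_mul, Units.val_mul]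
      congr 1
      congr 1
      rw [show LamP p lam n = diagGL p fun k => -⌊((n:ℝ) * lam k) / Real.log p⌋ from rfl,
        diagGL_inv_val]
      simp
    rw [hval, Matrix.mul_diagonal, Matrix.diagonal_mul, norm_mul, norm_mul,
      Padic.norm_p_zpow, Padic.norm_p_zpow, ← hcn]
    have h2 : (p:ℝ) ^ (-⌊((n:ℝ) * lam i) / Real.log p⌋) * cn
          * (p:ℝ) ^ (- -⌊((n:ℝ) * lam j) / Real.log p⌋)
        = cn * ((p:ℝ) ^ (-⌊((n:ℝ) * lam i) / Real.log p⌋)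
          * (p:ℝ) ^ (⌊((n:ℝ) * lam j) / Real.log p⌋)) := by
      rw [neg_neg]; ring
    rw [h2, ← zpow_add₀ hp0]
    congr 2
    rw [hDdef]; ring
  -- eventual inequality
  have hev : ∀ᶠ n in atTop, Lo n ≤ a n + b n := by
    filter_upwards [eventually_ge_atTop 1] with n hn
    have hApos := opNormP_pos i ((LamP p lam n)⁻¹ * b₁⁻¹ * x n)
    have hBpos := opNormP_pos i ((x n)⁻¹ * b₂ * LamP p lam n)
    have h1 : cn * (p:ℝ) ^ (D n) ≤
        opNormP p ((((LamP p lam n)⁻¹ * b₁⁻¹ * x n : GL (Fin d) ℚ_[p])) :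
          Matrix (Fin d) (Fin d) ℚ_[p])
        * opNormP p ((((x n)⁻¹ * b₂ * LamP p lam n : GL (Fin d) ℚ_[p])) :
          Matrix (Fin d) (Fin d) ℚ_[p]) := by
      rw [← hentry n]
      refine (norm_entry_le_opNormP _ i j).trans ?_
      rw [Units.val_mul]
      exact opNormP_mul_le _ _
    have hprodpos : 0 < cn * (p:ℝ) ^ (D n) :=
      mul_pos hcnorm (zpow_pos (zero_lt_one.trans hp1) _)
    have hlog : Real.log (cn * (p:ℝ) ^ (D n)) ≤
        Real.log (opNormP p ((((LamP p lam n)⁻¹ * b₁⁻¹ * x n : GL (Fin d) ℚ_[p])) :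
          Matrix (Fin d) (Fin d) ℚ_[p]))
        + Real.log (opNormP p ((((x n)⁻¹ * b₂ * LamP p lam n : GL (Fin d) ℚ_[p])) :
          Matrix (Fin d) (Fin d) ℚ_[p])) := by
      rw [← Real.log_mul hApos.ne' hBpos.ne']
      exact Real.log_le_log hprodpos h1
    have heq : Real.log (cn * (p:ℝ) ^ (D n)) = Real.log cn + (D n : ℝ) * Real.log p := by
      rw [Real.log_mul hcnorm.ne' (zpow_pos (zero_lt_one.trans hp1) _).ne',
        Real.log_zpow]
    have hn0 : (0:ℝ) ≤ 1 / (n:ℝ) := by positivity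
    calc Lo n = (1 / (n:ℝ)) * Real.log (cn * (p:ℝ) ^ (D n)) := by rw [hLodef]; rw [heq]
      _ ≤ _ := mul_le_mul_of_nonneg_left hlog hn0
      _ = a n + b n := by rw [hadef, hbdef]; ring
  -- the limit of the lower bound is lam j - lam i
  have hLolim : Tendsto Lo atTop (nhds (lam j - lam i)) := by
    have h0 : Tendsto (fun n : ℕ => (1 / (n:ℝ)) * Real.log cn) atTop (nhds 0) := by
      simpa using tendsto_one_div_atTop_nhds_zero_nat.mul_const (Real.log cn)
    have hjlim := tendsto_floor_mul_div (lam j / Real.log p)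
    have hilim := tendsto_floor_mul_div (lam i / Real.log p)
    have hsum := h0.add ((hjlim.sub hilim).mul_const (Real.log p))
    have hlimval : (0:ℝ) + (lam j / Real.log p - lam i / Real.log p) * Real.log p
        = lam j - lam i := by
      field_simp
      simp
    rw [hlimval] at hsum
    refine hsum.congr (fun n => ?_)
    rw [hLodef, hDdef]
    simp only []
    rw [show (n:ℝ) * (lam j / Real.log p) = ((n:ℝ) * lam j) / Real.log p by ring,
      show (n:ℝ) * (lam i / Real.log p) = ((n:ℝ) * lam i) / Real.log p by ring]
    push_cast
    ring
  have hsumlim : Tendsto (fun n => a n + b n) atTop (nhds 0) := by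
    simpa using h₁.add h₂
  have hle : lam j - lam i ≤ 0 := le_of_tendsto_of_tendsto hLolim hsumlim hev
  linarith
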